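/- Let p and n be positive integers with n ≥ 2, and let a_1, ..., a_n be positive integers with gcd(a_1, ..., a_n) = 1 such that p does not divide a_i for any i (write a_i = p·k_i + t_i with 1 ≤ t_i ≤ p − 1). Let T_p be the set of tuples (x_1, ..., x_n) of integers with 0 ≤ x_i ≤ p − 1 for all i such that p divides x_1·t_1 + ... + x_n·t_n and x_1·t_1 + ... + x_n·t_n ≠ 0. Then the quotient ⟨a_1,...,a_n⟩/p equals the numerical semigroup generated by {a_1, ..., a_n} together with the numbers (x_1·a_1 + ... + x_n·a_n)/p for (x_1, ..., x_n) ∈ T_p. -/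

import Mathlib

lemma mem_closure_range_iff_sum {n : ℕ} (a : Fin n → ℕ) (m : ℕ) :
    m ∈ AddSubmonoid.closure (Set.range a) ↔ ∃ c : Fin n → ℕ, ∑ i, c i * a i = m := by
  constructor
  · intro h
    induction h using AddSubmonoid.closure_induction with
    | mem y hy =>
      obtain ⟨i, rfl⟩ := hy
      exact ⟨Pi.single i 1, by simp [Finset.sum_eq_single i, Pi.single_apply]⟩
    | zero => exact ⟨0, by simp⟩
    | add y z _ _ hy hz =>
      obtain ⟨c, rfl⟩ := hy
      obtain ⟨d, rfl⟩ := hz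
      exact ⟨c + d, by simp [add_mul, Finset.sum_add_distrib]⟩
  · rintro ⟨c, rfl⟩
    exact AddSubmonoid.sum_mem _ fun i _ => by
      exact
        AddSubmonoid.nsmul_mem _ (AddSubmonoid.subset_closure (Set.mem_range_self i)) (c i)

lemma sum_mod_eq {n : ℕ} (p : ℕ) (x a : Fin n → ℕ) :
    (∑ i, x i * a i) % p = (∑ i, x i * (a i % p)) % p := by
  rw [Finset.sum_nat_mod, Finset.sum_nat_mod _ _ (fun i => x i * (a i % p))]
  congr 1
  exact Finset.sum_congr rfl fun i _ => by
    rw [Nat.mul_mod, Nat.mul_mod (x i) (a i % p), Nat.mod_mod_of_dvd _ dvd_rfl]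

theorem quotient_numerical_semigroup_generators
    (p n : ℕ) (hp : 0 < p) (hn : 2 ≤ n) (a : Fin n → ℕ)
    (ha : ∀ i, 0 < a i) (hgcd : Finset.univ.gcd a = 1)
    (hnd : ∀ i, ¬ p ∣ a i) :
    {m : ℕ | p * m ∈ AddSubmonoid.closure (Set.range a)} =
      ↑(AddSubmonoid.closure
        (Set.range a ∪
          {s : ℕ | ∃ x : Fin n → ℕ, (∀ i, x i ≤ p - 1) ∧
            p ∣ (∑ i, x i * (a i % p)) ∧ (∑ i, x i * (a i % p)) ≠ 0 ∧
            s = (∑ i, x i * a i) / p})) := by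
  ext m
  simp only [Set.mem_setOf_eq, SetLike.mem_coe]
  constructor
  · intro h
    obtain ⟨c, hc⟩ := (mem_closure_range_iff_sum a _).mp h
    set q : Fin n → ℕ := fun i => c i / p with hq
    set r : Fin n → ℕ := fun i => c i % p with hr
    have hsplit : ∑ i, c i * a i = p * (∑ i, q i * a i) + ∑ i, r i * a i := by
      rw [Finset.mul_sum, ← Finset.sum_add_distrib]
      refine Finset.sum_congr rfl fun i _ => ?_
      conv_lhs => rw [← Nat.div_add_mod (c i) p]
      rw [add_mul, mul_assoc]
    have hdvd : p ∣ ∑ i, r i * a i := by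
      have : p ∣ p * (∑ i, q i * a i) + ∑ i, r i * a i := by
        rw [← hsplit, hc]; exact ⟨m, rfl⟩
      exact (Nat.dvd_add_right ⟨_, rfl⟩).mp this
    have hdvdt : p ∣ ∑ i, r i * (a i % p) := by
      rwa [Nat.dvd_iff_mod_eq_zero, ← sum_mod_eq, ← Nat.dvd_iff_mod_eq_zero]
    by_cases hz : (∑ i, r i * (a i % p)) = 0
    · have hr0 : ∀ i, r i = 0 := by
        intro i
        have := (Finset.sum_eq_zero_iff).mp hz i (Finset.mem_univ i)
        rcases Nat.mul_eq_zero.mp this with h' | h'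
        · exact h'
        · exact absurd (Nat.dvd_iff_mod_eq_zero.mpr h') (hnd i)
      have : ∑ i, c i * a i = p * ∑ i, q i * a i := by
        rw [hsplit]; simp [hr0]
      have hm : m = ∑ i, q i * a i := by
        have := hc.symm.trans this
        exact Nat.eq_of_mul_eq_mul_left hp this
      refine AddSubmonoid.closure_mono Set.subset_union_left ?_
      exact (mem_closure_range_iff_sum a m).mpr ⟨q, hm.symm⟩
    · have hm : m = (∑ i, q i * a i) + (∑ i, r i * a i) / p := by
        have h1 : p * m = p * ((∑ i, q i * a i) + (∑ i, r i * a i) / p) := by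
          rw [Nat.mul_add, Nat.mul_div_cancel' hdvd, ← hsplit, hc]
        exact Nat.eq_of_mul_eq_mul_left hp h1
      rw [hm]
      refine AddSubmonoid.add_mem _ ?_ ?_
      · exact AddSubmonoid.closure_mono Set.subset_union_left
          ((mem_closure_range_iff_sum a _).mpr ⟨q, rfl⟩)
      · refine AddSubmonoid.subset_closure (Or.inr ⟨r, fun i => ?_, hdvdt, hz, rfl⟩)
        exact Nat.le_sub_one_of_lt (Nat.mod_lt _ hp)
  · intro h
    have hQ : AddSubmonoid.closure
        (Set.range a ∪
          {s : ℕ | ∃ x : Fin n → ℕ, (∀ i, x i ≤ p - 1) ∧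
            p ∣ (∑ i, x i * (a i % p)) ∧ (∑ i, x i * (a i % p)) ≠ 0 ∧
            s = (∑ i, x i * a i) / p}) ≤
        (AddSubmonoid.closure (Set.range a)).comap (AddMonoidHom.mulLeft (p : ℕ)) := by
      rw [AddSubmonoid.closure_le]
      rintro s (hs | ⟨x, hx, hdvdt, hne, rfl⟩)
      · simp only [AddSubmonoid.coe_comap, Set.mem_preimage, AddMonoidHom.coe_mulLeft,
          SetLike.mem_coe]
        obtain ⟨i, rfl⟩ := hs
        exact (mem_closure_range_iff_sum a _).mpr
          ⟨Pi.single i p, by simp [Finset.sum_eq_single i, Pi.single_apply]⟩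
      · simp only [AddSubmonoid.coe_comap, Set.mem_preimage, AddMonoidHom.coe_mulLeft,
          SetLike.mem_coe]
        have hd : p ∣ ∑ i, x i * a i := by
          rwa [Nat.dvd_iff_mod_eq_zero, sum_mod_eq, ← Nat.dvd_iff_mod_eq_zero]
        rw [Nat.mul_div_cancel' hd]
        exact (mem_closure_range_iff_sum a _).mpr ⟨x, rfl⟩
    exact hQ h
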